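/- Analytic inequality for z ≥ 1/2: let A > 0, B ≥ A/4 + 1/A, A' = A + 1, B' = B + 1. Then for all y ∈ [0,1] and z ∈ [1/2, 1), one has B'·(y ln(y/z) + (1−y) ln((1−y)/(1−z))) + A'(1−y) − y·(1−z)/z ≥ 0, with the convention 0·ln 0 = 0. -/

import Mathlib

open Finset Filter

/-- A probability distribution on finite binary strings:
nonnegative, `1` on the empty string, and additive under one-symbol extension. -/
def IsDistr (ρ : List Bool → ℝ) : Prop :=
  (∀ x, 0 ≤ ρ x) ∧ ρ [] = 1 ∧
    ∀ x, ρ x = ρ (x ++ [false]) + ρ (x ++ [true])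

/-- Conditional probability `ρ(b | x) = ρ(xb)/ρ(x)` (junk `0` when `ρ x = 0`). -/
noncomputable def condP (ρ : List Bool → ℝ) (x : List Bool) (b : Bool) : ℝ :=
  ρ (x ++ [b]) / ρ x

/-- Instantaneous relative entropy
`h_t(x) = ∑_b μ(b|x) ln (μ(b|x)/ξ(b|x))` (conventions `0·ln 0 = 0` are automatic
since `Real.log 0 = 0` and `r/0 = 0`). -/
noncomputable def instEnt (μ ξ : List Bool → ℝ) (x : List Bool) : ℝ :=
  ∑ b : Bool, condP μ x b * Real.log (condP μ x b / condP ξ x b)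

/-- Total relative entropy `H_n = ∑_{t=1}^n ∑_{x_{<t}} μ(x_{<t}) h_t(x_{<t})`
(histories of length `t-1`, i.e. length `t ∈ {0,…,n-1}`). -/
noncomputable def totalEnt (μ ξ : List Bool → ℝ) (n : ℕ) : ℝ :=
  ∑ t ∈ Finset.range n, ∑ x : Fin t → Bool,
    μ (List.ofFn x) * instEnt μ ξ (List.ofFn x)

/-- `ρ`-expected loss of predicting `y` after history `x`. -/
noncomputable def expLoss (ρ : List Bool → ℝ) (l : Bool → Bool → ℝ)
    (x : List Bool) (y : Bool) : ℝ :=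
  ∑ b : Bool, condP ρ x b * l b y

/-- `Y` is a fixed choice of minimizers for the scheme `Λ_ρ`. -/
def IsPredictor (ρ : List Bool → ℝ) (l : Bool → Bool → ℝ)
    (Y : List Bool → Bool) : Prop :=
  ∀ x y, expLoss ρ l x (Y x) ≤ expLoss ρ l x y

/-- Total `μ`-expected loss `L_{nΛ}` of the scheme with minimizers `Y`. -/
noncomputable def totalLoss (μ : List Bool → ℝ) (l : Bool → Bool → ℝ)
    (Y : List Bool → Bool) (n : ℕ) : ℝ :=
  ∑ t ∈ Finset.range n, ∑ x : Fin t → Bool,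
    μ (List.ofFn x) * expLoss μ l (List.ofFn x) (Y (List.ofFn x))

section AuxAnalytic

/-- Tangent-line bound for `p ↦ p log (p/m)`. -/
lemma tangent_log (p t m : ℝ) (hp : 0 ≤ p) (ht : 0 < t) (hm : 0 < m) :
    p * Real.log (t / m) + p - t ≤ p * Real.log (p / m) := by
  rcases eq_or_lt_of_le hp with h | h
  · subst h; simp [ht.le]
  · have h1 : Real.log (p / m) - Real.log (t / m) = Real.log (p / t) := by
      rw [Real.log_div h.ne' hm.ne', Real.log_div ht.ne' hm.ne',
        Real.log_div h.ne' ht.ne']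
      ring
    have h2 : Real.log (t / p) ≤ t / p - 1 :=
      Real.log_le_sub_one_of_pos (by positivity)
    have h3 : Real.log (t / p) = - Real.log (p / t) := by
      rw [← Real.log_inv, inv_div]
    have h4 : 1 - t / p ≤ Real.log (p / t) := by rw [h3] at h2; linarith
    have h5 : p * (1 - t / p) ≤ p * Real.log (p / t) :=
      mul_le_mul_of_nonneg_left h4 h.le
    have h6 : p * (1 - t / p) = p - t := by field_simp
    nlinarith [h5, h1]

/-- Chord bound for `exp` on `[x₁, x₂]`. -/
lemma exp_combo {t x₁ x₂ : ℝ} (ht0 : 0 ≤ t) (ht1 : t ≤ 1) :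
    Real.exp ((1 - t) * x₁ + t * x₂) ≤ (1 - t) * Real.exp x₁ + t * Real.exp x₂ :=
  convexOn_exp.2 (Set.mem_univ x₁) (Set.mem_univ x₂) (by linarith) ht0 (by ring)

lemma beta_star (A : ℝ) (hA : 0 < A) :
    Real.exp (4 * A / (A + 2) ^ 2) +
      Real.exp (-((A + 1) * (4 * A / (A + 2) ^ 2))) ≤ 2 := by
  have hd : (0:ℝ) < (A + 2) ^ 2 := by positivity
  set r : ℝ := 4 * A / (A + 2) ^ 2 with hr_def
  have hr0 : 0 < r := by positivity
  have hr1 : r ≤ 1 := by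
    rw [hr_def, div_le_one hd]; nlinarith [sq_nonneg (A - 2)]
  set x : ℝ := (A + 1) * r with hx_def
  have hx0 : 0 ≤ x := by positivity
  -- upper bound on exp r
  have h1 : Real.exp r ≤ 1 + r + r ^ 2 / 2 + r ^ 3 / 6 + 5 / 96 * r ^ 4 := by
    have := Real.exp_bound' hr0.le hr1 (n := 4) (by norm_num)
    norm_num [Finset.sum_range_succ, Nat.factorial] at this
    linarith
  -- lower bound on exp x
  have h2 : 1 + x + x ^ 2 / 2 + x ^ 3 / 6 + x ^ 4 / 24 ≤ Real.exp x := by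
    have := Real.sum_le_exp_of_nonneg hx0 5
    norm_num [Finset.sum_range_succ, Nat.factorial] at this
    linarith
  set S : ℝ := 1 + x + x ^ 2 / 2 + x ^ 3 / 6 + x ^ 4 / 24 with hS_def
  have hSpos : 0 < S := by positivity
  have h3 : Real.exp (-x) ≤ 1 / S := by
    rw [Real.exp_neg]
    rw [inv_eq_one_div]
    exact one_div_le_one_div_of_le hSpos h2
  -- the key polynomial fact
  have key : 1 ≤ (1 - r - r ^ 2 / 2 - r ^ 3 / 6 - 5 / 96 * r ^ 4) * S := by
    have identity : (1 - r - r ^ 2 / 2 - r ^ 3 / 6 - 5 / 96 * r ^ 4) * S - 1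
        = A ^ 4 * (92160 + 657408 * A + 2149376 * A ^ 2 + 4284928 * A ^ 3
            + 5829120 * A ^ 4 + 5724288 * A ^ 5 + 4172480 * A ^ 6
            + 2274336 * A ^ 7 + 915784 * A ^ 8 + 263104 * A ^ 9
            + 50592 * A ^ 10 + 5808 * A ^ 11 + 300 * A ^ 12)
          / (9 * (A + 2) ^ 16) := by
      rw [hS_def, hx_def, hr_def]
      field_simp
      ring
    have hpos : 0 ≤ A ^ 4 * (92160 + 657408 * A + 2149376 * A ^ 2 + 4284928 * A ^ 3
            + 5829120 * A ^ 4 + 5724288 * A ^ 5 + 4172480 * A ^ 6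
            + 2274336 * A ^ 7 + 915784 * A ^ 8 + 263104 * A ^ 9
            + 50592 * A ^ 10 + 5808 * A ^ 11 + 300 * A ^ 12)
          / (9 * (A + 2) ^ 16) := by positivity
    linarith
  have h4 : 1 / S ≤ 1 - r - r ^ 2 / 2 - r ^ 3 / 6 - 5 / 96 * r ^ 4 := by
    rw [div_le_iff₀ hSpos]
    linarith
  calc Real.exp r + Real.exp (-x)
      ≤ (1 + r + r ^ 2 / 2 + r ^ 3 / 6 + 5 / 96 * r ^ 4) + 1 / S := by linarith
    _ ≤ 2 := by linarith

lemma beta_gen (A u : ℝ) (hA : 0 < A) (hu0 : 0 < u) (hu : u ≤ 4 * A / (A + 2) ^ 2) :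
    Real.exp u + Real.exp (-((A + 1) * u)) ≤ 2 := by
  have hd : (0:ℝ) < (A + 2) ^ 2 := by positivity
  have hU : (0:ℝ) < 4 * A / (A + 2) ^ 2 := by positivity
  set U : ℝ := 4 * A / (A + 2) ^ 2 with hU_def
  set t : ℝ := u / U with ht_def
  have ht0 : 0 ≤ t := by positivity
  have ht1 : t ≤ 1 := by rw [ht_def, div_le_one hU]; exact hu
  have htu : u = (1 - t) * 0 + t * U := by
    rw [ht_def]; field_simp; ring
  have h1 : Real.exp u ≤ (1 - t) * 1 + t * Real.exp U := by
    calc Real.exp u = Real.exp ((1 - t) * 0 + t * U) := by rw [← htu]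
      _ ≤ (1 - t) * Real.exp 0 + t * Real.exp U := exp_combo ht0 ht1
      _ = (1 - t) * 1 + t * Real.exp U := by rw [Real.exp_zero]
  have htu2 : -((A + 1) * u) = (1 - t) * 0 + t * (-((A + 1) * U)) := by
    rw [htu]; ring
  have h2 : Real.exp (-((A + 1) * u)) ≤ (1 - t) * 1 + t * Real.exp (-((A + 1) * U)) := by
    calc Real.exp (-((A + 1) * u))
        = Real.exp ((1 - t) * 0 + t * (-((A + 1) * U))) := by rw [← htu2]
      _ ≤ (1 - t) * Real.exp 0 + t * Real.exp (-((A + 1) * U)) := exp_combo ht0 ht1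
      _ = (1 - t) * 1 + t * Real.exp (-((A + 1) * U)) := by rw [Real.exp_zero]
  have h3 := beta_star A hA
  have h4 := mul_le_mul_of_nonneg_left h3 ht0
  linarith

end AuxAnalytic

set_option maxHeartbeats 1000000 in
/-- analytic inequality for `z ≥ 1/2`, eq. (15):
with `A' = A+1`, `B' = B+1`, for all `y ∈ [0,1]` and `z ∈ [1/2,1)`,
`B'(y ln(y/z) + (1−y) ln((1−y)/(1−z))) + A'(1−y) − y (1−z)/z ≥ 0`. -/
theorem analytic_inequality_z_ge_half
    (A B : ℝ) (hA : 0 < A) (hB : A / 4 + 1 / A ≤ B)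
    (y z : ℝ) (hy : y ∈ Set.Icc (0 : ℝ) 1) (hz : z ∈ Set.Ico (1 / 2 : ℝ) 1) :
    0 ≤ (B + 1) * (y * Real.log (y / z) + (1 - y) * Real.log ((1 - y) / (1 - z)))
        + (A + 1) * (1 - y) - y * ((1 - z) / z) := by
  obtain ⟨hy0, hy1⟩ := hy
  obtain ⟨hz1, hz2⟩ := hz
  have hz0 : 0 < z := by linarith
  set w : ℝ := 1 - z with hw_def
  have hw0 : 0 < w := by simp [hw_def]; linarith
  have hwz : w ≤ z := by simp [hw_def]; linarith
  set B' : ℝ := B + 1 with hB'_def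
  have hABB : (A + 2) ^ 2 / (4 * A) ≤ B' := by
    rw [hB'_def]
    have : (A + 2) ^ 2 / (4 * A) = A / 4 + 1 / A + 1 := by field_simp; ring
    linarith
  have hB'pos : 0 < B' := lt_of_lt_of_le (by positivity) hABB
  set u : ℝ := 1 / B' with hu_def
  have hu0 : 0 < u := by positivity
  have huU : u ≤ 4 * A / (A + 2) ^ 2 := by
    rw [hu_def]
    have h4A : (0:ℝ) < 4 * A := by linarith
    have hd : (0:ℝ) < (A + 2) ^ 2 := by positivity
    rw [div_le_div_iff₀ hB'pos hd]
    have := (div_le_iff₀ h4A).mp hABB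
    nlinarith [this]
  have hbeta : Real.exp u + Real.exp (-((A + 1) * u)) ≤ 2 := beta_gen A u hA hu0 huU
  -- scalar inequality
  set q : ℝ := w / z with hq_def
  have hq0 : 0 < q := by positivity
  have hq1 : q ≤ 1 := by rw [hq_def, div_le_one hz0]; exact hwz
  have hzq : z * q = w := by rw [hq_def]; field_simp
  have hchord : Real.exp (q * u) ≤ (1 - q) * 1 + q * Real.exp u := by
    calc Real.exp (q * u) = Real.exp ((1 - q) * 0 + q * u) := by ring_nf
      _ ≤ (1 - q) * Real.exp 0 + q * Real.exp u := exp_combo hq0.le hq1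
      _ = (1 - q) * 1 + q * Real.exp u := by rw [Real.exp_zero]
  have hscalar : z * Real.exp (q * u) + w * Real.exp (-((A + 1) * u)) ≤ 1 := by
    nlinarith [hchord, hbeta, Real.exp_pos (-((A + 1) * u)), hz0, hq0, hq1]
  set t2 : ℝ := w * Real.exp (-((A + 1) * u)) with ht2_def
  have ht2pos : 0 < t2 := by positivity
  set t1 : ℝ := 1 - t2 with ht1_def
  have hexpq : 0 < z * Real.exp (q * u) := by positivity
  have ht1ge : z * Real.exp (q * u) ≤ t1 := by rw [ht1_def]; linarith
  have ht1pos : 0 < t1 := lt_of_lt_of_le hexpq ht1ge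
  -- bracket 1 : w / z ≤ B' * log (t1 / z)
  have hlog1 : q * u ≤ Real.log (t1 / z) := by
    have h1 : Real.exp (q * u) ≤ t1 / z := by
      rw [le_div_iff₀ hz0]; linarith [ht1ge]
    have h2 := Real.log_le_log (Real.exp_pos (q * u)) h1
    rwa [Real.log_exp] at h2
  have hbr1 : w / z ≤ B' * Real.log (t1 / z) := by
    have h3 : B' * (q * u) ≤ B' * Real.log (t1 / z) :=
      mul_le_mul_of_nonneg_left hlog1 hB'pos.le
    have h4 : B' * (q * u) = w / z := by
      rw [hq_def, hu_def]; field_simp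
    linarith
  -- bracket 2 : log (t2 / w) = -(A+1)/B' * ... exactly
  have hlog2 : Real.log (t2 / w) = -((A + 1) * u) := by
    have ht2w : t2 / w = Real.exp (-((A + 1) * u)) := by
      rw [ht2_def]; field_simp
    rw [ht2w, Real.log_exp]
  -- tangent bounds
  have htan1 : y * Real.log (t1 / z) + y - t1 ≤ y * Real.log (y / z) :=
    tangent_log y t1 z hy0 ht1pos hz0
  have htan2 : (1 - y) * Real.log (t2 / w) + (1 - y) - t2 ≤
      (1 - y) * Real.log ((1 - y) / w) :=
    tangent_log (1 - y) t2 w (by linarith) ht2pos hw0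
  rw [hlog2] at htan2
  -- assemble
  have hsum : y * Real.log (t1 / z) - (1 - y) * ((A + 1) * u) ≤
      y * Real.log (y / z) + (1 - y) * Real.log ((1 - y) / w) := by
    have : t1 + t2 = 1 := by rw [ht1_def]; ring
    nlinarith [htan1, htan2]
  have hmul : B' * (y * Real.log (t1 / z) - (1 - y) * ((A + 1) * u)) ≤
      B' * (y * Real.log (y / z) + (1 - y) * Real.log ((1 - y) / w)) :=
    mul_le_mul_of_nonneg_left hsum hB'pos.le
  have hBu : B' * u = 1 := by rw [hu_def]; field_simp
  have hfin : y * (w / z) ≤ y * (B' * Real.log (t1 / z)) :=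
    mul_le_mul_of_nonneg_left hbr1 hy0
  have hexpand : B' * (y * Real.log (t1 / z) - (1 - y) * ((A + 1) * u))
      = y * (B' * Real.log (t1 / z)) - (1 - y) * (A + 1) * (B' * u) := by ring
  rw [hBu] at hexpand
  nlinarith [hmul, hfin, hexpand]
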